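/- For every t > 0 and every x ∈ ℝ^d, the gradient of the smoothed objective is the posterior expectation of the gradient of f: ∇_x g(x;t) = ∫_{ℝ^d} ∇f(y) · p_{0|t}(y|x) dy. -/

import Mathlib

open MeasureTheory
open scoped RealInnerProductSpace

/-- The Gibbs density `p₀(y) = e^{-f(y)/λ} / ∫ e^{-f(z)/λ} dz`. -/
noncomputable def gibbs {d : ℕ} (lam : ℝ) (f : EuclideanSpace ℝ (Fin d) → ℝ)
    (y : EuclideanSpace ℝ (Fin d)) : ℝ :=
  Real.exp (-(f y) / lam) / ∫ z, Real.exp (-(f z) / lam)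

/-- The Gaussian kernel `k(z;t) = (2πt)^{-d/2} e^{-‖z‖²/(2t)}`. -/
noncomputable def gaussK {d : ℕ} (t : ℝ) (z : EuclideanSpace ℝ (Fin d)) : ℝ :=
  (2 * Real.pi * t) ^ (-(d : ℝ) / 2) * Real.exp (-‖z‖ ^ 2 / (2 * t))

/-- The smoothed density `p(x;t) = ∫ p₀(y) k(x-y;t) dy`. -/
noncomputable def smoothedDensity {d : ℕ} (lam : ℝ) (f : EuclideanSpace ℝ (Fin d) → ℝ)
    (t : ℝ) (x : EuclideanSpace ℝ (Fin d)) : ℝ :=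
  ∫ y, gibbs lam f y * gaussK t (x - y)

/-- The smoothed objective `g(x;t) = -λ log p(x;t)`. -/
noncomputable def smoothedObj {d : ℕ} (lam : ℝ) (f : EuclideanSpace ℝ (Fin d) → ℝ)
    (t : ℝ) (x : EuclideanSpace ℝ (Fin d)) : ℝ :=
  -lam * Real.log (smoothedDensity lam f t x)

/-- The posterior density `p_{0|t}(y|x) = p₀(y) k(x-y;t) / p(x;t)`. -/
noncomputable def posterior {d : ℕ} (lam : ℝ) (f : EuclideanSpace ℝ (Fin d) → ℝ)
    (t : ℝ) (x y : EuclideanSpace ℝ (Fin d)) : ℝ :=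
  gibbs lam f y * gaussK t (x - y) / smoothedDensity lam f t x

lemma integral_fderiv_single_eq_zero {n : ℕ} (i : Fin (n+1))
    (H : EuclideanSpace ℝ (Fin (n+1)) → ℝ)
    (H' : EuclideanSpace ℝ (Fin (n+1)) → (EuclideanSpace ℝ (Fin (n+1)) →L[ℝ] ℝ))
    (hderiv : ∀ y, HasFDerivAt H (H' y) y)
    (hH : Integrable H) (hH' : Integrable (fun y => H' y (EuclideanSpace.single i 1))) :
    ∫ y, H' y (EuclideanSpace.single i 1) = 0 := by
  classical
  set u : EuclideanSpace ℝ (Fin (n+1)) := EuclideanSpace.single i 1 with hu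
  set e := (MeasurableEquiv.toLp 2 (Fin (n+1) → ℝ)).symm with he
  set q := MeasurableEquiv.piFinSuccAbove (fun _ : Fin (n+1) => ℝ) i with hq
  set Ψ : (ℝ × (Fin n → ℝ)) ≃ᵐ EuclideanSpace ℝ (Fin (n+1)) := q.symm.trans e.symm with hΨ
  have MP : MeasurePreserving Ψ ((volume : Measure ℝ).prod volume) volume := by
    exact ((EuclideanSpace.volume_preserving_symm_measurableEquiv_toLp (Fin (n+1))).symm).comp
      ((volume_preserving_piFinSuccAbove (fun _ : Fin (n+1) => ℝ) i).symm)
  have key : ∀ s w, Ψ (s, w) = Ψ (0, w) + s • u := by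
    intro s w
    ext j
    have hcoord : ∀ (s : ℝ), (Ψ (s, w)) j = Fin.insertNth (α := fun _ : Fin (n+1) => ℝ) i s w j := by
      intro s
      simp [Ψ, q, e, MeasurableEquiv.piFinSuccAbove_symm_apply,
        MeasurableEquiv.coe_toLp, Fin.insertNthEquiv]
    rw [PiLp.add_apply, PiLp.smul_apply, hcoord, hcoord]
    induction j using Fin.succAboveCases with
    | i => exact i
    | x =>
        simp [u, EuclideanSpace.single_apply, Fin.insertNth_apply_same]
    | p j =>
        simp [u, EuclideanSpace.single_apply, Fin.insertNth_apply_succAbove, Fin.succAbove_ne i j]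
  have hH_comp : Integrable (fun p : ℝ × (Fin n → ℝ) => H (Ψ p))
      ((volume : Measure ℝ).prod volume) :=
    (MP.integrable_comp_emb Ψ.measurableEmbedding).2 hH
  have hint_comp : Integrable (fun p : ℝ × (Fin n → ℝ) => H' (Ψ p) u)
      ((volume : Measure ℝ).prod volume) :=
    (MP.integrable_comp_emb Ψ.measurableEmbedding).2 hH'
  calc ∫ y, H' y u = ∫ p, H' (Ψ p) u ∂((volume : Measure ℝ).prod volume) :=
        (MP.integral_comp Ψ.measurableEmbedding _).symm
    _ = ∫ w, ∫ s, H' (Ψ (s, w)) u := integral_prod_symm _ hint_comp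
    _ = 0 := by
        rw [← integral_zero (Fin n → ℝ) ℝ (μ := volume)]
        apply integral_congr_ae
        filter_upwards [hH_comp.prod_left_ae, hint_comp.prod_left_ae] with w hw1 hw2
        refine integral_eq_zero_of_hasDerivAt_of_integrable (fun s => ?_) hw2 hw1
        have hline : HasDerivAt (fun s : ℝ => Ψ (s, w)) u s := by
          have : (fun s : ℝ => Ψ (s, w)) = fun s : ℝ => Ψ (0, w) + s • u := by
            funext s; exact key s w
          rw [this]
          simpa using ((hasDerivAt_id s).smul_const u).const_add (Ψ (0, w))
        exact (hderiv (Ψ (s, w))).comp_hasDerivAt s hline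

noncomputable def kderiv {d : ℕ} (t : ℝ) (z : EuclideanSpace ℝ (Fin d)) :
    EuclideanSpace ℝ (Fin d) →L[ℝ] ℝ :=
  (-t⁻¹ * gaussK t z) • innerSL ℝ z

lemma gaussK_pos {d : ℕ} {t : ℝ} (ht : 0 < t) (z : EuclideanSpace ℝ (Fin d)) :
    0 < gaussK t z := by
  have : (0:ℝ) < 2 * Real.pi * t := by positivity
  exact mul_pos (Real.rpow_pos_of_pos this _) (Real.exp_pos _)

lemma gaussK_le {d : ℕ} {t : ℝ} (ht : 0 < t) (z : EuclideanSpace ℝ (Fin d)) :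
    gaussK t z ≤ (2 * Real.pi * t) ^ (-(d : ℝ) / 2) := by
  have h1 : Real.exp (-‖z‖ ^ 2 / (2 * t)) ≤ 1 := by
    apply Real.exp_le_one_iff.2
    apply div_nonpos_of_nonpos_of_nonneg
    · simpa using sq_nonneg ‖z‖
    · linarith
  have h2 : (0:ℝ) < (2 * Real.pi * t) ^ (-(d : ℝ) / 2) := by
    have : (0:ℝ) < 2 * Real.pi * t := by positivity
    exact Real.rpow_pos_of_pos this _
  calc gaussK t z ≤ (2 * Real.pi * t) ^ (-(d : ℝ) / 2) * 1 :=
        mul_le_mul_of_nonneg_left h1 h2.le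
    _ = _ := mul_one _

lemma continuous_gaussK {d : ℕ} (t : ℝ) : Continuous (gaussK (d := d) t) := by
  unfold gaussK
  fun_prop

lemma continuous_kderiv {d : ℕ} (t : ℝ) : Continuous (kderiv (d := d) t) := by
  unfold kderiv
  exact ((continuous_const.mul (continuous_gaussK t)).smul (innerSL ℝ).continuous)

lemma mul_exp_neg_sq_le {t : ℝ} (ht : 0 < t) {r : ℝ} (hr : 0 ≤ r) :
    r * Real.exp (-r ^ 2 / (2 * t)) ≤ Real.sqrt (2 * t) := by
  have h2t : (0:ℝ) < 2 * t := by linarith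
  have hs : 0 < Real.sqrt (2 * t) := Real.sqrt_pos.2 h2t
  rcases le_or_gt r (Real.sqrt (2 * t)) with h | h
  · have h1 : Real.exp (-r ^ 2 / (2 * t)) ≤ 1 := by
      apply Real.exp_le_one_iff.2
      apply div_nonpos_of_nonpos_of_nonneg
      · simpa using sq_nonneg r
      · linarith
    nlinarith [Real.exp_pos (-r ^ 2 / (2 * t))]
  · have hrpos : 0 < r := hs.trans h
    have hsq : 2 * t < r ^ 2 := by
      have h2 := Real.sq_sqrt h2t.le
      nlinarith
    have ha : 0 < r ^ 2 / (2 * t) := by positivity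
    have hexp : Real.exp (-r ^ 2 / (2 * t)) ≤ (r ^ 2 / (2 * t))⁻¹ := by
      rw [neg_div, Real.exp_neg]
      apply inv_anti₀ ha
      linarith [Real.add_one_le_exp (r ^ 2 / (2 * t))]
    have h1 : r * Real.exp (-r ^ 2 / (2 * t)) ≤ r * (r ^ 2 / (2 * t))⁻¹ :=
      mul_le_mul_of_nonneg_left hexp hrpos.le
    have h2 : r * (r ^ 2 / (2 * t))⁻¹ = 2 * t / r := by
      field_simp
    have h3 : 2 * t / r ≤ 2 * t / Real.sqrt (2 * t) := by
      apply div_le_div_of_nonneg_left h2t.le hs h.le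
    have h4 : 2 * t / Real.sqrt (2 * t) = Real.sqrt (2 * t) := by
      exact Real.div_sqrt
    linarith

lemma norm_kderiv_le {d : ℕ} {t : ℝ} (ht : 0 < t) (z : EuclideanSpace ℝ (Fin d)) :
    ‖kderiv t z‖ ≤ t⁻¹ * (2 * Real.pi * t) ^ (-(d : ℝ) / 2) * Real.sqrt (2 * t) := by
  set c : ℝ := (2 * Real.pi * t) ^ (-(d : ℝ) / 2) with hc
  have hcpos : 0 < c := by
    have : (0:ℝ) < 2 * Real.pi * t := by positivity
    exact Real.rpow_pos_of_pos this _
  have h1 : ‖kderiv t z‖ = t⁻¹ * gaussK t z * ‖z‖ := by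
    rw [kderiv]
    rw [norm_smul ((-t⁻¹ * gaussK t z) : ℝ) ((innerSL ℝ) z), innerSL_apply_norm,
      Real.norm_eq_abs, abs_mul]
    rw [abs_of_nonneg (gaussK_pos ht z).le, abs_neg, abs_of_nonneg (by positivity : (0:ℝ) ≤ t⁻¹)]
  rw [h1]
  have h2 : gaussK t z * ‖z‖ = c * (‖z‖ * Real.exp (-‖z‖ ^ 2 / (2 * t))) := by
    rw [gaussK]; ring
  have h3 : ‖z‖ * Real.exp (-‖z‖ ^ 2 / (2 * t)) ≤ Real.sqrt (2 * t) :=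
    mul_exp_neg_sq_le ht (norm_nonneg z)
  calc t⁻¹ * gaussK t z * ‖z‖ = t⁻¹ * (c * (‖z‖ * Real.exp (-‖z‖ ^ 2 / (2 * t)))) := by
        rw [mul_assoc, h2]
    _ ≤ t⁻¹ * (c * Real.sqrt (2 * t)) := by
        apply mul_le_mul_of_nonneg_left _ (by positivity)
        exact mul_le_mul_of_nonneg_left h3 hcpos.le
    _ = t⁻¹ * c * Real.sqrt (2 * t) := by ring

lemma hasFDerivAt_gaussK {d : ℕ} {t : ℝ} (ht : 0 < t) (z : EuclideanSpace ℝ (Fin d)) :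
    HasFDerivAt (gaussK t) (kderiv t z) z := by
  have hn : HasFDerivAt (fun z : EuclideanSpace ℝ (Fin d) => ‖z‖ ^ 2)
      ((2 : ℕ) • innerSL ℝ z) z := (hasStrictFDerivAt_norm_sq z).hasFDerivAt
  have hu : HasFDerivAt (fun z : EuclideanSpace ℝ (Fin d) => -‖z‖ ^ 2 / (2 * t))
      ((-(2 * t)⁻¹) • ((2 : ℕ) • innerSL ℝ z)) z := by
    have h := hn.const_mul (-(2 * t)⁻¹)
    have heq : (fun z : EuclideanSpace ℝ (Fin d) => -‖z‖ ^ 2 / (2 * t))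
        = fun z : EuclideanSpace ℝ (Fin d) => (-(2 * t)⁻¹) * ‖z‖ ^ 2 := by
      funext w
      field_simp
    rw [heq]
    exact h
  have hexp : HasFDerivAt (fun z : EuclideanSpace ℝ (Fin d) => Real.exp (-‖z‖ ^ 2 / (2 * t)))
      (Real.exp (-‖z‖ ^ 2 / (2 * t)) • ((-(2 * t)⁻¹) • ((2 : ℕ) • innerSL ℝ z))) z :=
    (Real.hasDerivAt_exp _).comp_hasFDerivAt z hu
  have h := hexp.const_mul ((2 * Real.pi * t) ^ (-(d : ℝ) / 2))
  have : HasFDerivAt (gaussK t)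
      (((2 * Real.pi * t) ^ (-(d : ℝ) / 2) : ℝ) •
        (Real.exp (-‖z‖ ^ 2 / (2 * t)) • ((-(2 * t)⁻¹) • ((2 : ℕ) • innerSL ℝ z)))) z := h
  refine this.congr_fderiv ?_
  ext v
  simp only [kderiv, gaussK, ContinuousLinearMap.smul_apply, smul_eq_mul, nsmul_eq_mul,
    Nat.cast_ofNat]
  ring


set_option maxHeartbeats 2000000 in
/-- the gradient of the smoothed objective is the posterior expectation of the
gradient of `f`: `∇_x g(x;t) = ∫ ∇f(y) p_{0|t}(y|x) dy`. -/
theorem gradient_smoothed_eq_posterior_mean_gradient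
    (d : ℕ) (hd : 1 ≤ d) (lam : ℝ) (hlam : 0 < lam)
    (f : EuclideanSpace ℝ (Fin d) → ℝ) (hf : Measurable f)
    (hZpos : 0 < ∫ z, Real.exp (-(f z) / lam))
    (hZfin : Integrable (fun z => Real.exp (-(f z) / lam)))
    (hC1 : ContDiff ℝ 1 f)
    (hgradint : Integrable (fun y => ‖gradient f y‖ * Real.exp (-(f y) / lam)))
    (t : ℝ) (ht : 0 < t) (x : EuclideanSpace ℝ (Fin d)) :
    gradient (fun x' => smoothedObj lam f t x') x
      = ∫ y, posterior lam f t x y • gradient f y := by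
  obtain ⟨n, rfl⟩ : ∃ n, d = n + 1 := ⟨d - 1, by omega⟩
  have hlamne : lam ≠ 0 := hlam.ne'
  set φ : EuclideanSpace ℝ (Fin (n + 1)) → ℝ := fun y => Real.exp (-(f y) / lam) with hφdef
  have hφcont : Continuous φ :=
    Real.continuous_exp.comp ((hC1.continuous.neg).div_const lam)
  have hφpos : ∀ y, 0 < φ y := fun y => Real.exp_pos _
  set Z : ℝ := ∫ z, Real.exp (-(f z) / lam) with hZdef
  have hZpos' : 0 < Z := hZpos
  set c : ℝ := (2 * Real.pi * t) ^ (-((n + 1 : ℕ) : ℝ) / 2) with hcdef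
  have hcpos : 0 < c := Real.rpow_pos_of_pos (by positivity) _
  have hkle : ∀ z : EuclideanSpace ℝ (Fin (n + 1)), gaussK t z ≤ c := fun z => gaussK_le ht z
  have hkpos : ∀ z : EuclideanSpace ℝ (Fin (n + 1)), 0 < gaussK t z := gaussK_pos ht
  set C : ℝ := t⁻¹ * c * Real.sqrt (2 * t) with hCdef
  have hkd : ∀ z : EuclideanSpace ℝ (Fin (n + 1)), ‖kderiv t z‖ ≤ C := fun z =>
    norm_kderiv_le ht z
  -- derivative of φ
  have hfd : ∀ y, HasFDerivAt f (fderiv ℝ f y) y := fun y =>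
    (hC1.differentiable one_ne_zero y).hasFDerivAt
  set φ' : EuclideanSpace ℝ (Fin (n + 1)) → (EuclideanSpace ℝ (Fin (n + 1)) →L[ℝ] ℝ) :=
    fun y => (-lam⁻¹ * φ y) • fderiv ℝ f y with hφ'def
  have hφd : ∀ y, HasFDerivAt φ (φ' y) y := by
    intro y
    have h1 : HasFDerivAt (fun y => -(f y) / lam) ((-lam⁻¹) • fderiv ℝ f y) y := by
      have heq : (fun y : EuclideanSpace ℝ (Fin (n + 1)) => -(f y) / lam)
          = fun y => (-lam⁻¹) * f y := by
        funext w; field_simp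
      rw [heq]
      exact (hfd y).const_mul _
    have h2 := (Real.hasDerivAt_exp (-(f y) / lam)).comp_hasFDerivAt y h1
    have h3 : φ' y = Real.exp (-(f y) / lam) • ((-lam⁻¹) • fderiv ℝ f y) := by
      rw [hφ'def, smul_smul]
      congr 1
      simp only [hφdef]
      ring
    rw [h3]
    exact h2
  have hgradeq : ∀ y, gradient f y = (InnerProductSpace.toDual ℝ _).symm (fderiv ℝ f y) :=
    fun y => rfl
  have hgradnorm : ∀ y, ‖fderiv ℝ f y‖ = ‖gradient f y‖ := by
    intro y
    rw [hgradeq y, LinearIsometryEquiv.norm_map]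
  have hfderivcont : Continuous (fun y => fderiv ℝ f y) := hC1.continuous_fderiv one_ne_zero
  -- integrability facts
  have hmeask : ∀ x' : EuclideanSpace ℝ (Fin (n + 1)),
      Continuous (fun y => gaussK t (x' - y)) := fun x' =>
    (continuous_gaussK t).comp (continuous_const.sub continuous_id)
  have hint1 : ∀ x' : EuclideanSpace ℝ (Fin (n + 1)),
      Integrable (fun y => φ y * gaussK t (x' - y)) := by
    intro x'
    refine (hZfin.const_mul c).mono'
      ((hφcont.mul (hmeask x')).aestronglyMeasurable) (Filter.Eventually.of_forall fun y => ?_)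
    rw [Real.norm_eq_abs, abs_mul, abs_of_nonneg (hφpos y).le, abs_of_nonneg (hkpos _).le]
    calc φ y * gaussK t (x' - y) ≤ φ y * c :=
          mul_le_mul_of_nonneg_left (hkle _) (hφpos y).le
      _ = c * φ y := mul_comm _ _
  have hintA : Integrable (fun y => φ y • kderiv t (x - y)) := by
    refine (hZfin.const_mul C).mono'
      ((hφcont.smul ((continuous_kderiv t).comp
        (continuous_const.sub continuous_id))).aestronglyMeasurable)
      (Filter.Eventually.of_forall fun y => ?_)
    rw [norm_smul (φ y) (kderiv t (x - y)), Real.norm_eq_abs, abs_of_nonneg (hφpos y).le]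
    calc φ y * ‖kderiv t (x - y)‖ ≤ φ y * C :=
          mul_le_mul_of_nonneg_left (hkd _) (hφpos y).le
      _ = C * φ y := mul_comm _ _
  have hintB : Integrable (fun y => gaussK t (x - y) • φ' y) := by
    refine (hgradint.const_mul (c * lam⁻¹)).mono'
      (((hmeask x).smul ((continuous_const.mul hφcont).smul
        hfderivcont)).aestronglyMeasurable)
      (Filter.Eventually.of_forall fun y => ?_)
    rw [norm_smul (gaussK t (x - y)) (φ' y), hφ'def]
    rw [norm_smul (-lam⁻¹ * Real.exp (-(f y) / lam)) (fderiv ℝ f y)]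
    rw [Real.norm_eq_abs, Real.norm_eq_abs,
      abs_of_nonneg (hkpos _).le, abs_mul, abs_neg, abs_of_nonneg (inv_pos.2 hlam).le,
      abs_of_nonneg (Real.exp_pos (-(f y) / lam)).le, hgradnorm y]
    calc gaussK t (x - y) * (lam⁻¹ * Real.exp (-f y / lam) * ‖gradient f y‖)
          ≤ c * (lam⁻¹ * Real.exp (-f y / lam) * ‖gradient f y‖) := by
            apply mul_le_mul_of_nonneg_right (hkle _)
            positivity
      _ = c * lam⁻¹ * (‖gradient f y‖ * Real.exp (-(f y) / lam)) := by ring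
  -- differentiation under the integral sign
  have hN : HasFDerivAt (fun x' => ∫ y, φ y * gaussK t (x' - y))
      (∫ y, φ y • kderiv t (x - y)) x := by
    refine hasFDerivAt_integral_of_dominated_of_fderiv_le (μ := volume)
      (F := fun x' y => φ y * gaussK t (x' - y))
      (F' := fun x' y => φ y • kderiv t (x' - y))
      (bound := fun y => C * φ y) (Metric.ball_mem_nhds x one_pos)
      (Filter.Eventually.of_forall fun x' =>
        (hφcont.mul (hmeask x')).aestronglyMeasurable)
      (hint1 x)
      ((hφcont.smul ((continuous_kderiv t).comp
        (continuous_const.sub continuous_id))).aestronglyMeasurable)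
      (Filter.Eventually.of_forall fun y => fun x' _ => ?_)
      (hZfin.const_mul C)
      (Filter.Eventually.of_forall fun y => fun x' _ => ?_)
    · rw [norm_smul (φ y) (kderiv t (x' - y)), Real.norm_eq_abs,
        abs_of_nonneg (hφpos y).le]
      calc φ y * ‖kderiv t (x' - y)‖ ≤ φ y * C :=
            mul_le_mul_of_nonneg_left (hkd _) (hφpos y).le
        _ = C * φ y := mul_comm _ _
    · have hk : HasFDerivAt (fun x' => gaussK t (x' - y)) (kderiv t (x' - y)) x' := by
        have h1 := (hasFDerivAt_gaussK ht (x' - y)).comp x' ((hasFDerivAt_id x').sub_const y)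
        exact h1
      exact hk.const_mul (φ y)
  -- integration by parts: the two continuous linear maps agree
  have hAB : (∫ y, φ y • kderiv t (x - y)) = ∫ y, gaussK t (x - y) • φ' y := by
    refine ContinuousLinearMap.coe_injective
      (Module.Basis.ext (EuclideanSpace.basisFun (Fin (n + 1)) ℝ).toBasis fun i => ?_)
    have hb : ((EuclideanSpace.basisFun (Fin (n + 1)) ℝ).toBasis i)
        = EuclideanSpace.single i 1 := by
      rw [OrthonormalBasis.coe_toBasis, EuclideanSpace.basisFun_apply]
    rw [hb]
    set u : EuclideanSpace ℝ (Fin (n + 1)) := EuclideanSpace.single i 1 with hu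
    show (∫ y, φ y • kderiv t (x - y)) u = (∫ y, gaussK t (x - y) • φ' y) u
    rw [ContinuousLinearMap.integral_apply hintA, ContinuousLinearMap.integral_apply hintB]
    have hI1 : Integrable (fun y => φ y * kderiv t (x - y) u) := by
      have := hintA.apply_continuousLinearMap u
      simpa using this
    have hI2 : Integrable (fun y => gaussK t (x - y) * φ' y u) := by
      have := hintB.apply_continuousLinearMap u
      simpa using this
    have hH : ∀ y, HasFDerivAt (fun y => φ y * gaussK t (x - y))
        (φ y • (-(kderiv t (x - y))) + gaussK t (x - y) • φ' y) y := by
      intro y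
      have hκ : HasFDerivAt (fun y : EuclideanSpace ℝ (Fin (n + 1)) => gaussK t (x - y))
          (-(kderiv t (x - y))) y := by
        have h1 := (hasFDerivAt_gaussK ht (x - y)).comp y
          ((hasFDerivAt_const x y).sub (hasFDerivAt_id y))
        have h2 : (kderiv t (x - y)).comp
            ((0 : _ →L[ℝ] _) - ContinuousLinearMap.id ℝ (EuclideanSpace ℝ (Fin (n + 1))))
            = -(kderiv t (x - y)) := by
          ext v; simp
        rwa [h2] at h1
      exact (hφd y).mul hκ
    have heval : (fun y => (φ y • (-(kderiv t (x - y))) + gaussK t (x - y) • φ' y) u)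
        = fun y => gaussK t (x - y) * φ' y u - φ y * kderiv t (x - y) u := by
      funext y
      simp
      ring
    have hzero := integral_fderiv_single_eq_zero i _ _ hH (hint1 x)
      (by rw [heval]; exact hI2.sub hI1)
    rw [heval, integral_sub hI2 hI1] at hzero
    have hkey : ∫ y, φ y * kderiv t (x - y) u = ∫ y, gaussK t (x - y) * φ' y u := by linarith
    simpa using hkey
  -- the smoothed density rewritten
  have hsd : ∀ x' : EuclideanSpace ℝ (Fin (n + 1)),
      smoothedDensity lam f t x' = Z⁻¹ * ∫ y, φ y * gaussK t (x' - y) := by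
    intro x'
    have h1 : smoothedDensity lam f t x' = ∫ y, Z⁻¹ * (φ y * gaussK t (x' - y)) := by
      unfold smoothedDensity gibbs
      rw [← hZdef]
      congr 1
      funext y
      simp only [hφdef]
      ring
    rw [h1, integral_const_mul]
  have hNpos : 0 < ∫ y, φ y * gaussK t (x - y) := by
    rw [integral_pos_iff_support_of_nonneg
      (fun y => (mul_pos (hφpos y) (hkpos _)).le) (hint1 x)]
    have hsupp : Function.support (fun y => φ y * gaussK t (x - y)) = Set.univ :=
      Set.eq_univ_of_forall fun y => (mul_pos (hφpos y) (hkpos _)).ne'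
    rw [hsupp]
    exact isOpen_univ.measure_pos volume ⟨x, trivial⟩
  have hppos : 0 < smoothedDensity lam f t x := by
    rw [hsd x]
    exact mul_pos (inv_pos.2 hZpos') hNpos
  set A : EuclideanSpace ℝ (Fin (n + 1)) →L[ℝ] ℝ := ∫ y, φ y • kderiv t (x - y) with hAdef
  have hP : HasFDerivAt (fun x' => smoothedDensity lam f t x') (Z⁻¹ • A) x := by
    have heq : (fun x' => smoothedDensity lam f t x')
        = fun x' => Z⁻¹ * ∫ y, φ y * gaussK t (x' - y) := funext hsd
    rw [heq]
    exact hN.const_mul Z⁻¹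
  have hobj : HasFDerivAt (fun x' => smoothedObj lam f t x')
      ((-lam) • ((smoothedDensity lam f t x)⁻¹ • (Z⁻¹ • A))) x := by
    have hlog := (Real.hasDerivAt_log hppos.ne').comp_hasFDerivAt x hP
    have heq : (fun x' => smoothedObj lam f t x')
        = fun x' => -lam * Real.log (smoothedDensity lam f t x') := rfl
    rw [heq]
    exact hlog.const_mul (-lam)
  -- integrability of the posterior-weighted gradient
  have hpostcont : Continuous (fun y => posterior lam f t x y) := by
    unfold posterior gibbs
    exact (((hφcont.div_const _).mul (hmeask x)).div_const _)
  have hpostnonneg : ∀ y, 0 ≤ posterior lam f t x y := by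
    intro y
    unfold posterior gibbs
    rw [← hZdef]
    exact div_nonneg (mul_nonneg (div_nonneg (Real.exp_pos _).le hZpos'.le)
      (hkpos _).le) hppos.le
  have hgradcont : Continuous (fun y => gradient f y) := by
    have : (fun y => gradient f y)
        = fun y => (InnerProductSpace.toDual ℝ _).symm (fderiv ℝ f y) := funext hgradeq
    rw [this]
    exact (InnerProductSpace.toDual ℝ _).symm.continuous.comp hfderivcont
  have hpost_le : ∀ y, posterior lam f t x y
      ≤ (Z⁻¹ * c * (smoothedDensity lam f t x)⁻¹) * Real.exp (-(f y) / lam) := by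
    intro y
    unfold posterior gibbs
    rw [← hZdef]
    rw [div_le_iff₀ hppos]
    have h1 : Real.exp (-f y / lam) / Z * gaussK t (x - y)
        ≤ Real.exp (-f y / lam) / Z * c :=
      mul_le_mul_of_nonneg_left (hkle _) (by positivity)
    calc Real.exp (-f y / lam) / Z * gaussK t (x - y)
        ≤ Real.exp (-f y / lam) / Z * c := h1
      _ = Z⁻¹ * c * (smoothedDensity lam f t x)⁻¹ * Real.exp (-f y / lam)
          * smoothedDensity lam f t x := by
          field_simp
  have hpostint : Integrable (fun y => posterior lam f t x y • gradient f y) := by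
    refine (hgradint.const_mul (Z⁻¹ * c * (smoothedDensity lam f t x)⁻¹)).mono'
      ((hpostcont.smul hgradcont).aestronglyMeasurable)
      (Filter.Eventually.of_forall fun y => ?_)
    rw [norm_smul (posterior lam f t x y) (gradient f y), Real.norm_eq_abs,
      abs_of_nonneg (hpostnonneg y)]
    calc posterior lam f t x y * ‖gradient f y‖
        ≤ (Z⁻¹ * c * (smoothedDensity lam f t x)⁻¹) * Real.exp (-(f y) / lam)
            * ‖gradient f y‖ :=
          mul_le_mul_of_nonneg_right (hpost_le y) (norm_nonneg _)
      _ = Z⁻¹ * c * (smoothedDensity lam f t x)⁻¹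
            * (‖gradient f y‖ * Real.exp (-(f y) / lam)) := by ring
  -- conclude
  refine HasGradientAt.gradient ?_
  rw [hasGradientAt_iff_hasFDerivAt]
  have hDeq : (InnerProductSpace.toDual ℝ (EuclideanSpace ℝ (Fin (n + 1))))
      (∫ y, posterior lam f t x y • gradient f y)
      = (-lam) • ((smoothedDensity lam f t x)⁻¹ • (Z⁻¹ • A)) := by
    apply ContinuousLinearMap.ext
    intro v
    have hLHS : (InnerProductSpace.toDual ℝ (EuclideanSpace ℝ (Fin (n + 1))))
        (∫ y, posterior lam f t x y • gradient f y) v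
        = ∫ y, posterior lam f t x y * fderiv ℝ f y v := by
      rw [InnerProductSpace.toDual_apply_apply, real_inner_comm, ← integral_inner hpostint v]
      congr 1
      funext y
      rw [real_inner_comm, real_inner_smul_left]
      congr 1
      rw [hgradeq y]
      exact InnerProductSpace.toDual_symm_apply
    have hBv : A v = ∫ y, gaussK t (x - y) * ((-lam⁻¹ * φ y) * fderiv ℝ f y v) := by
      rw [hAB, ContinuousLinearMap.integral_apply hintB]
      congr 1
    have hRHS : ((-lam) • ((smoothedDensity lam f t x)⁻¹ • (Z⁻¹ • A))) v
        = ∫ y, (-lam * (smoothedDensity lam f t x)⁻¹ * Z⁻¹)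
            * (gaussK t (x - y) * ((-lam⁻¹ * φ y) * fderiv ℝ f y v)) := by
      rw [ContinuousLinearMap.smul_apply, ContinuousLinearMap.smul_apply,
        ContinuousLinearMap.smul_apply, hBv, smul_eq_mul, smul_eq_mul, smul_eq_mul,
        integral_const_mul]
      ring
    rw [hLHS, hRHS]
    apply integral_congr_ae
    filter_upwards with y
    unfold posterior gibbs
    rw [← hZdef]
    simp only [hφdef, hφ'def]
    field_simp
  rw [hDeq]
  exact hobj
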